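/- For the poset Δ⁺ of positive roots of type A_n, the OY-number is invariant under the reverse operator: 𝒴(𝔛(Γ)) = 𝒴(Γ) for every antichain Γ of Δ⁺. -/

import Mathlib

open Finset

/-- The root order on pairs: `(i,j) ≼ (i',j')` iff `i' ≤ i` and `j ≤ j'`. -/
def rle (p q : ℕ × ℕ) : Prop := q.1 ≤ p.1 ∧ p.2 ≤ q.2

instance : DecidableRel rle := fun p q =>
  inferInstanceAs (Decidable (q.1 ≤ p.1 ∧ p.2 ≤ q.2))

/-- The positive roots of type `A_n`, modelled as pairs `(i,j)` with `1 ≤ i ≤ j ≤ n`. -/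
def roots (n : ℕ) : Finset (ℕ × ℕ) :=
  ((Finset.Icc 1 n) ×ˢ (Finset.Icc 1 n)).filter (fun p => p.1 ≤ p.2)

/-- `Γ` is an antichain in `Δ⁺(A_n)`: a set of pairwise incomparable positive roots. -/
def IsAC (n : ℕ) (Γ : Finset (ℕ × ℕ)) : Prop :=
  Γ ⊆ roots n ∧ ∀ p ∈ Γ, ∀ q ∈ Γ, rle p q → p = q

/-- The upper ideal `I(Γ) = {x ∈ Δ⁺ : ∃ γ ∈ Γ, γ ≼ x}` generated by `Γ`. -/
def upIdeal (n : ℕ) (Γ : Finset (ℕ × ℕ)) : Finset (ℕ × ℕ) :=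
  (roots n).filter (fun x => ∃ γ ∈ Γ, rle γ x)

/-- The set of maximal elements of `S` with respect to the root order. -/
def maxOf (S : Finset (ℕ × ℕ)) : Finset (ℕ × ℕ) :=
  S.filter (fun x => ∀ y ∈ S, rle x y → y = x)

/-- The set of minimal elements of `S` with respect to the root order. -/
def minOf (S : Finset (ℕ × ℕ)) : Finset (ℕ × ℕ) :=
  S.filter (fun x => ∀ y ∈ S, rle y x → y = x)

/-- The reverse operator `𝔛`, sending an antichain `Γ` to the set of maximal
elements of `Δ⁺ \ I(Γ)`. -/
def Xrev (n : ℕ) (Γ : Finset (ℕ × ℕ)) : Finset (ℕ × ℕ) :=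
  maxOf (roots n \ upIdeal n Γ)

/-- `r_Γ(γ) = #(I(Γ) \ {γ})_min − #I(Γ)_min + 1`. -/
def rGam (n : ℕ) (Γ : Finset (ℕ × ℕ)) (γ : ℕ × ℕ) : ℤ :=
  ((minOf (upIdeal n Γ \ {γ})).card : ℤ) - ((minOf (upIdeal n Γ)).card : ℤ) + 1

/-- The OY-number `𝒴(Γ) = Σ_{γ ∈ Γ} r_Γ(γ)`; in particular `𝒴(∅) = 0`. -/
def OY (n : ℕ) (Γ : Finset (ℕ × ℕ)) : ℤ := ∑ γ ∈ Γ, rGam n Γ γ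

/-- For `Δ⁺(A_n)`, the OY-number is invariant under the reverse operator:
`𝒴(𝔛(Γ)) = 𝒴(Γ)` for every antichain `Γ`. -/

-- basic lemmas
lemma mem_roots' {n : ℕ} {p : ℕ × ℕ} : p ∈ roots n ↔ 1 ≤ p.1 ∧ p.1 ≤ p.2 ∧ p.2 ≤ n := by
  simp [roots, Finset.mem_filter, Finset.mem_product]; omega

lemma rle_iff {p q : ℕ × ℕ} : rle p q ↔ q.1 ≤ p.1 ∧ p.2 ≤ q.2 := Iff.rfl

lemma rle_refl' (p : ℕ × ℕ) : rle p p := ⟨le_refl _, le_refl _⟩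

lemma rle_trans' {p q r : ℕ × ℕ} (h1 : rle p q) (h2 : rle q r) : rle p r :=
  ⟨le_trans h2.1 h1.1, le_trans h1.2 h2.2⟩

lemma rle_antisymm' {p q : ℕ × ℕ} (h1 : rle p q) (h2 : rle q p) : p = q :=
  Prod.ext (le_antisymm h2.1 h1.1) (le_antisymm h1.2 h2.2)

lemma mem_upIdeal {n : ℕ} {Γ : Finset (ℕ × ℕ)} {x : ℕ × ℕ} :
    x ∈ upIdeal n Γ ↔ x ∈ roots n ∧ ∃ γ ∈ Γ, rle γ x := by
  simp [upIdeal, Finset.mem_filter]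

lemma minOf_upIdeal {n : ℕ} {Γ : Finset (ℕ × ℕ)} (hΓ : IsAC n Γ) :
    minOf (upIdeal n Γ) = Γ := by
  ext x
  simp only [minOf, Finset.mem_filter, mem_upIdeal]
  constructor
  · rintro ⟨⟨hx, γ, hγ, hle⟩, hmin⟩
    have := hmin γ ⟨hΓ.1 hγ, γ, hγ, rle_refl' γ⟩ hle
    rwa [← this]
  · intro hx
    refine ⟨⟨hΓ.1 hx, x, hx, rle_refl' x⟩, ?_⟩
    rintro y ⟨hy, γ, hγ, hle⟩ hyx
    have hgx : γ = x := hΓ.2 γ hγ x hx (rle_trans' hle hyx)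
    subst hgx
    exact rle_antisymm' hyx hle

-- antichain coordinate facts
lemma AC_lt {n : ℕ} {Γ : Finset (ℕ × ℕ)} (hΓ : IsAC n Γ) {p q : ℕ × ℕ}
    (hp : p ∈ Γ) (hq : q ∈ Γ) (h : p.1 < q.1) : p.2 < q.2 := by
  by_contra h'
  exact absurd (hΓ.2 q hq p hp ⟨le_of_lt h, le_of_not_gt h'⟩) (by rintro rfl; omega)

lemma AC_fst_inj {n : ℕ} {Γ : Finset (ℕ × ℕ)} (hΓ : IsAC n Γ) {p q : ℕ × ℕ}
    (hp : p ∈ Γ) (hq : q ∈ Γ) (h : p.1 = q.1) : p = q := by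
  rcases lt_trichotomy p.2 q.2 with h'|h'|h'
  · exact hΓ.2 p hp q hq ⟨le_of_eq h.symm, le_of_lt h'⟩
  · exact Prod.ext h h'
  · exact (hΓ.2 q hq p hp ⟨le_of_eq h, le_of_lt h'⟩).symm

/-- free covers of `γ` in `Γ` -/
def covers (n : ℕ) (Γ : Finset (ℕ × ℕ)) (γ : ℕ × ℕ) : Finset (ℕ × ℕ) :=
  (if 2 ≤ γ.1 ∧ γ.1 - 1 ∉ Γ.image Prod.fst then {(γ.1 - 1, γ.2)} else ∅) ∪
  (if γ.2 < n ∧ γ.2 + 1 ∉ Γ.image Prod.snd then {(γ.1, γ.2 + 1)} else ∅)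

lemma minOf_sdiff {n : ℕ} {Γ : Finset (ℕ × ℕ)} (hΓ : IsAC n Γ) {γ : ℕ × ℕ}
    (hγ : γ ∈ Γ) : minOf (upIdeal n Γ \ {γ}) = (Γ.erase γ) ∪ covers n Γ γ := by
  have hγr' := mem_roots'.1 (hΓ.1 hγ)
  ext x
  simp only [minOf, Finset.mem_filter, Finset.mem_sdiff, Finset.mem_singleton,
    mem_upIdeal, Finset.mem_union, Finset.mem_erase]
  constructor
  · rintro ⟨⟨⟨hx, δ, hδ, hle⟩, hne⟩, hmin⟩
    by_cases hδγ : δ = γ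
    · rw [hδγ] at hle
      right
      have hx' := mem_roots'.1 hx
      obtain ⟨hle1, hle2⟩ := hle
      rcases Decidable.em (x.1 < γ.1) with hl | hl
      · -- left cover
        have h2 : 2 ≤ γ.1 := by omega
        have hin : (γ.1 - 1, γ.2) ∈ roots n := by rw [mem_roots']; refine ⟨by omega, by omega, by omega⟩
        have hyne : (γ.1 - 1, γ.2) ≠ γ := by
          intro h; apply_fun Prod.fst at h; simp at h; omega
        have hxeq : x = (γ.1 - 1, γ.2) :=
          (hmin _ ⟨⟨hin, γ, hγ, ⟨by omega, by omega⟩⟩, hyne⟩ ⟨by omega, by omega⟩).symm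
        have hfree : γ.1 - 1 ∉ Γ.image Prod.fst := by
          simp only [Finset.mem_image, not_exists]
          rintro δ' ⟨hδ', hδ1'⟩
          have hδγ' : δ' ≠ γ := by intro h; rw [h] at hδ1'; omega
          have hδ2' : δ'.2 < γ.2 := AC_lt hΓ hδ' hγ (by omega)
          have heq : δ' = x := hmin δ' ⟨⟨hΓ.1 hδ', δ', hδ', rle_refl' δ'⟩, hδγ'⟩
            (by rw [hxeq]; exact ⟨by omega, by omega⟩)
          rw [hxeq] at heq
          apply_fun Prod.snd at heq; simp at heq; omega
        rw [hxeq]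
        simp [covers, h2, hfree]
      · -- right cover
        have hr : γ.2 < x.2 := by
          rcases Nat.lt_or_ge γ.2 x.2 with h|h
          · exact h
          · exact absurd (rle_antisymm' ⟨hle1, hle2⟩ ⟨by omega, by omega⟩).symm hne
        have hn2 : γ.2 < n := by omega
        have hin : (γ.1, γ.2 + 1) ∈ roots n := by rw [mem_roots']; refine ⟨by omega, by omega, by omega⟩
        have hyne : (γ.1, γ.2 + 1) ≠ γ := by
          intro h; apply_fun Prod.snd at h; simp at h
        have hxeq : x = (γ.1, γ.2 + 1) :=
          (hmin _ ⟨⟨hin, γ, hγ, ⟨by omega, by omega⟩⟩, hyne⟩ ⟨by omega, by omega⟩).symm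
        have hfree : γ.2 + 1 ∉ Γ.image Prod.snd := by
          simp only [Finset.mem_image, not_exists]
          rintro δ' ⟨hδ', hδ2'⟩
          have hδγ' : δ' ≠ γ := by intro h; rw [h] at hδ2'; omega
          have hδ1' : γ.1 < δ'.1 := by
            by_contra h
            rcases Nat.lt_or_ge δ'.1 γ.1 with h'|h'
            · have := AC_lt hΓ hδ' hγ h'; omega
            · exact hδγ' (AC_fst_inj hΓ hδ' hγ (by omega))
          have heq : δ' = x := hmin δ' ⟨⟨hΓ.1 hδ', δ', hδ', rle_refl' δ'⟩, hδγ'⟩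
            (by rw [hxeq]; exact ⟨by omega, by omega⟩)
          rw [hxeq] at heq
          apply_fun Prod.fst at heq; simp at heq; omega
        rw [hxeq]
        simp [covers, hn2, hfree]
    · left
      have : δ = x := hmin δ ⟨⟨hΓ.1 hδ, δ, hδ, rle_refl' δ⟩, hδγ⟩ hle
      subst this
      exact ⟨hne, hδ⟩
  · rintro (⟨hne, hδ⟩ | hc)
    · refine ⟨⟨⟨hΓ.1 hδ, x, hδ, rle_refl' x⟩, hne⟩, ?_⟩
      rintro y ⟨⟨hy, ε, hε, hεy⟩, hyγ⟩ hyx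
      have : ε = x := hΓ.2 ε hε x hδ (rle_trans' hεy hyx)
      subst this
      exact rle_antisymm' hyx hεy
    · simp only [covers, Finset.mem_union] at hc
      rcases hc with hc | hc
      · -- x is the left free cover
        split_ifs at hc with hcond
        · simp only [Finset.mem_singleton] at hc
          subst hc
          obtain ⟨h2, hfree⟩ := hcond
          refine ⟨⟨⟨by rw [mem_roots']; exact ⟨by omega, by omega, by omega⟩,
            γ, hγ, ⟨by omega, by omega⟩⟩,
            by intro h; apply_fun Prod.fst at h; simp at h; omega⟩, ?_⟩
          rintro y ⟨⟨hy, ε, hε, ⟨hεy1, hεy2⟩⟩, hyγ⟩ ⟨hyx1, hyx2⟩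
          simp only at hyx1 hyx2
          by_cases hεγ : ε = γ
          · rw [hεγ] at hεy1 hεy2
            have hy1 : y.1 = γ.1 - 1 ∨ y.1 = γ.1 := by omega
            have hy2 : y.2 = γ.2 := by omega
            rcases hy1 with h|h
            · exact Prod.ext h hy2
            · exact absurd (Prod.ext h hy2) hyγ
          · exfalso
            have hε2 : ε.2 ≤ γ.2 := by omega
            have hε1 : ε.1 < γ.1 := by
              by_contra h
              exact hεγ (hΓ.2 ε hε γ hγ ⟨by omega, hε2⟩)
            have : ε.1 = γ.1 - 1 := by omega
            exact hfree (Finset.mem_image.2 ⟨ε, hε, this⟩)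
        · simp at hc
      · -- x is the right free cover
        split_ifs at hc with hcond
        · simp only [Finset.mem_singleton] at hc
          subst hc
          obtain ⟨hn2, hfree⟩ := hcond
          refine ⟨⟨⟨by rw [mem_roots']; exact ⟨by omega, by omega, by omega⟩,
            γ, hγ, ⟨by omega, by omega⟩⟩,
            by intro h; apply_fun Prod.snd at h; simp at h⟩, ?_⟩
          rintro y ⟨⟨hy, ε, hε, ⟨hεy1, hεy2⟩⟩, hyγ⟩ ⟨hyx1, hyx2⟩
          simp only at hyx1 hyx2
          by_cases hεγ : ε = γ
          · rw [hεγ] at hεy1 hεy2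
            have hy1 : y.1 = γ.1 := by omega
            have hy2 : y.2 = γ.2 ∨ y.2 = γ.2 + 1 := by omega
            rcases hy2 with h|h
            · exact absurd (Prod.ext hy1 h) hyγ
            · exact Prod.ext hy1 h
          · exfalso
            have hε1 : γ.1 ≤ ε.1 := by
              by_contra h
              have := AC_lt hΓ hε hγ (by omega)
              omega
            have hε2 : ε.2 = γ.2 + 1 := by
              rcases Nat.lt_or_ge γ.2 ε.2 with h|h
              · omega
              · exact absurd (hΓ.2 ε hε γ hγ ⟨hε1, h⟩) hεγ
            exact hfree (Finset.mem_image.2 ⟨ε, hε, hε2⟩)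
        · simp at hc

lemma cover_not_mem_left {n : ℕ} {Γ : Finset (ℕ × ℕ)} (hΓ : IsAC n Γ) {γ : ℕ × ℕ}
    (hγ : γ ∈ Γ) (h2 : 2 ≤ γ.1) : (γ.1 - 1, γ.2) ∉ Γ := by
  intro h
  have := hΓ.2 γ hγ (γ.1 - 1, γ.2) h ⟨by omega, by omega⟩
  apply_fun Prod.fst at this; simp at this; omega

lemma cover_not_mem_right {n : ℕ} {Γ : Finset (ℕ × ℕ)} (hΓ : IsAC n Γ) {γ : ℕ × ℕ}
    (hγ : γ ∈ Γ) : (γ.1, γ.2 + 1) ∉ Γ := by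
  intro h
  have := hΓ.2 γ hγ (γ.1, γ.2 + 1) h ⟨by omega, by omega⟩
  apply_fun Prod.snd at this; simp at this

lemma rGam_eq {n : ℕ} {Γ : Finset (ℕ × ℕ)} (hΓ : IsAC n Γ) {γ : ℕ × ℕ} (hγ : γ ∈ Γ) :
    rGam n Γ γ = (if 2 ≤ γ.1 ∧ γ.1 - 1 ∉ Γ.image Prod.fst then (1:ℤ) else 0) +
      (if γ.2 < n ∧ γ.2 + 1 ∉ Γ.image Prod.snd then (1:ℤ) else 0) := by
  have hcard : (covers n Γ γ).card =
      (if 2 ≤ γ.1 ∧ γ.1 - 1 ∉ Γ.image Prod.fst then 1 else 0) +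
      (if γ.2 < n ∧ γ.2 + 1 ∉ Γ.image Prod.snd then 1 else 0) := by
    rw [covers]
    have hne : ((γ.1 - 1, γ.2) : ℕ × ℕ) ≠ (γ.1, γ.2 + 1) := by
      intro h; apply_fun Prod.snd at h; simp at h
    split_ifs with h1 h2 h2
    · rw [Finset.card_union_of_disjoint (by simp [hne])]; simp
    · simp
    · simp
    · simp
  have hdisj : Disjoint (Γ.erase γ) (covers n Γ γ) := by
    rw [Finset.disjoint_right]
    intro x hx
    simp only [covers, Finset.mem_union] at hx
    rcases hx with hx | hx <;> split_ifs at hx with h <;> simp only [Finset.mem_singleton,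
      Finset.notMem_empty] at hx
    · subst hx
      intro hmem
      exact cover_not_mem_left hΓ hγ h.1 (Finset.mem_of_mem_erase hmem)
    · subst hx
      intro hmem
      exact cover_not_mem_right hΓ hγ (Finset.mem_of_mem_erase hmem)
  have hk : 1 ≤ Γ.card := Finset.card_pos.2 ⟨γ, hγ⟩
  rw [rGam, minOf_upIdeal hΓ, minOf_sdiff hΓ hγ, Finset.card_union_of_disjoint hdisj,
    Finset.card_erase_of_mem hγ]
  push_cast [hcard]
  split_ifs <;> push_cast <;> omega

lemma OY_eq {n : ℕ} {Γ : Finset (ℕ × ℕ)} (hΓ : IsAC n Γ) :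
    OY n Γ = ((Γ.filter (fun γ => 2 ≤ γ.1 ∧ γ.1 - 1 ∉ Γ.image Prod.fst)).card : ℤ) +
      ((Γ.filter (fun γ => γ.2 < n ∧ γ.2 + 1 ∉ Γ.image Prod.snd)).card : ℤ) := by
  rw [OY, Finset.sum_congr rfl (fun γ hγ => rGam_eq hΓ hγ), Finset.sum_add_distrib]
  congr 1
  · rw [Finset.sum_ite, Finset.sum_const, Finset.sum_const]; simp
  · rw [Finset.sum_ite, Finset.sum_const, Finset.sum_const]; simp

lemma Xrev_isAC {n : ℕ} (Γ : Finset (ℕ × ℕ)) : IsAC n (Xrev n Γ) := by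
  constructor
  · intro x hx
    simp only [Xrev, maxOf, Finset.mem_filter, Finset.mem_sdiff] at hx
    exact hx.1.1
  · intro p hp q hq hpq
    simp only [Xrev, maxOf, Finset.mem_filter, Finset.mem_sdiff] at hp hq
    exact (hp.2 q hq.1 hpq).symm

/-- gap lemma: for a function strictly monotone on `[a,b]`,
if `f t + 1 = f s` then `t + 1 = s`. -/
lemma gap_lemma {f : ℕ → ℕ} {a b : ℕ}
    (hmono : ∀ s t, a ≤ s → s < t → t ≤ b → f s < f t)
    {s t : ℕ} (ha : a ≤ s) (hs : s ≤ b) (ha' : a ≤ t) (ht : t ≤ b)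
    (h : f t + 1 = f s) : t + 1 = s := by
  have hts : t < s := by
    by_contra hc
    rcases Nat.eq_or_lt_of_le (Nat.le_of_not_lt hc) with h'|h'
    · rw [h'] at h; omega
    · have := hmono s t ha h' ht; omega
  rcases Nat.eq_or_lt_of_le (Nat.succ_le_of_lt hts) with h'|h'
  · omega
  · have h1 := hmono t (t+1) ha' (by omega) (by omega)
    have h2 := hmono (t+1) s (by omega) (by omega) hs
    omega

lemma abstract_main (n k : ℕ) (hn : 1 ≤ n) (I J : ℕ → ℕ)
    (hI0 : I 0 = 0) (hJtop : J (k+1) = n+1)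
    (hImono : ∀ s t, s < t → t ≤ k → I s < I t)
    (hJmono : ∀ s t, 1 ≤ s → s < t → t ≤ k+1 → J s < J t)
    (hbounds : ∀ s, 1 ≤ s → s ≤ k → 1 ≤ I s ∧ I s ≤ J s ∧ J s ≤ n)
    (Γ : Finset (ℕ × ℕ))
    (hΓeq : Γ = (Finset.range k).image (fun m => (I (m+1), J (m+1)))) :
    OY n (Xrev n Γ) = OY n Γ := by
  -- strict-monotonicity iff versions
  have hIiff : ∀ s t, s ≤ k → t ≤ k → (I s < I t ↔ s < t) := by
    intro s t hs ht
    constructor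
    · intro h
      by_contra hc
      push_neg at hc
      rcases Nat.eq_or_lt_of_le hc with h'|h'
      · subst h'; exact lt_irrefl _ h
      · exact absurd (hImono t s h' hs) (by omega)
    · intro h; exact hImono s t h ht
  have hJiff : ∀ s t, 1 ≤ s → 1 ≤ t → s ≤ k+1 → t ≤ k+1 → (J s < J t ↔ s < t) := by
    intro s t h1s h1t hs ht
    constructor
    · intro h
      by_contra hc
      push_neg at hc
      rcases Nat.eq_or_lt_of_le hc with h'|h'
      · subst h'; exact lt_irrefl _ h
      · exact absurd (hJmono t s h1t h' hs) (by omega)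
    · intro h; exact hJmono s t h1s h ht
  -- membership in Γ
  have hmemΓ : ∀ x, x ∈ Γ ↔ ∃ s, 1 ≤ s ∧ s ≤ k ∧ x = (I s, J s) := by
    intro x
    rw [hΓeq]
    simp only [Finset.mem_image, Finset.mem_range]
    constructor
    · rintro ⟨m, hm, rfl⟩; exact ⟨m+1, by omega, by omega, rfl⟩
    · rintro ⟨s, h1, h2, rfl⟩; exact ⟨s-1, by omega, by rw [Nat.sub_add_cancel h1]⟩
  -- Γ is an antichain
  have hΓAC : IsAC n Γ := by
    constructor
    · intro x hx
      obtain ⟨s, h1, h2, rfl⟩ := (hmemΓ x).1 hx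
      obtain ⟨a, b, c⟩ := hbounds s h1 h2
      rw [mem_roots']; exact ⟨a, b, c⟩
    · intro p hp q hq hpq
      obtain ⟨s, hs1, hs2, rfl⟩ := (hmemΓ p).1 hp
      obtain ⟨t, ht1, ht2, rfl⟩ := (hmemΓ q).1 hq
      obtain ⟨hle1, hle2⟩ := hpq
      simp only at hle1 hle2
      have hts : ¬ s < t := fun h => by have := hImono s t h ht2; omega
      have hst : ¬ t < s := fun h => by have := hJmono t s ht1 h (by omega); omega
      have : s = t := by omega
      subst this; rfl
  -- index sets for the reverse
  set Sf : Finset ℕ := (Finset.range (k+1)).filter (fun s => I s + 2 ≤ J (s+1)) with hSf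
  set f : ℕ → ℕ × ℕ := fun s => (I s + 1, J (s+1) - 1) with hf
  have hup : ∀ x, x ∈ upIdeal n Γ ↔
      (x ∈ roots n ∧ ∃ t, 1 ≤ t ∧ t ≤ k ∧ x.1 ≤ I t ∧ J t ≤ x.2) := by
    intro x
    rw [mem_upIdeal]
    constructor
    · rintro ⟨hxr, γ, hγ, hle1, hle2⟩
      obtain ⟨t, h1, h2, rfl⟩ := (hmemΓ γ).1 hγ
      exact ⟨hxr, t, h1, h2, hle1, hle2⟩
    · rintro ⟨hxr, t, h1, h2, hle1, hle2⟩
      exact ⟨hxr, (I t, J t), (hmemΓ _).2 ⟨t, h1, h2, rfl⟩, hle1, hle2⟩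
  have hXrev : Xrev n Γ = Sf.image f := by
    ext x
    simp only [Xrev, maxOf, Finset.mem_filter, Finset.mem_sdiff]
    constructor
    · rintro ⟨⟨hxr, hxnup⟩, hmax⟩
      have hx' := mem_roots'.1 hxr
      have havoid : ∀ t, 1 ≤ t → t ≤ k → ¬(x.1 ≤ I t ∧ J t ≤ x.2) :=
        fun t h1 h2 hc => hxnup ((hup x).2 ⟨hxr, t, h1, h2, hc.1, hc.2⟩)
      set s := Nat.findGreatest (fun t => I t < x.1) k with hsdef
      have hsk : s ≤ k := Nat.findGreatest_le k
      have hPs : I s < x.1 := by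
        have h0 : (fun t => I t < x.1) 0 := by simp only; omega
        have hval := Nat.findGreatest_spec (P := fun t => I t < x.1) (Nat.zero_le k) h0
        rw [← hsdef] at hval
        exact hval
      have hgt : ∀ t, s < t → t ≤ k → x.1 ≤ I t := by
        intro t h1 h2
        rw [hsdef] at h1
        exact Nat.le_of_not_lt (Nat.findGreatest_is_greatest
          (P := fun t => I t < x.1) h1 h2)
      have hb : x.2 < J (s+1) := by
        rcases Nat.lt_or_ge s k with h|h
        · have hav := havoid (s+1) (by omega) (by omega)
          have hx1 : x.1 ≤ I (s+1) := hgt (s+1) (by omega) (by omega)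
          omega
        · have hsk' : s = k := by omega
          have : J (s+1) = n + 1 := by rw [hsk', hJtop]
          omega
      have ha : x.1 = I s + 1 := by
        by_contra hne
        have h2 : I s + 2 ≤ x.1 := by omega
        have hyr : (x.1 - 1, x.2) ∈ roots n := by
          rw [mem_roots']; exact ⟨by omega, by omega, by omega⟩
        have hynup : (x.1 - 1, x.2) ∉ upIdeal n Γ := by
          intro hmem
          obtain ⟨_, t, h1, h2', hle1, hle2⟩ := (hup _).1 hmem
          have htlt : t < s + 1 := by
            by_contra hcon
            push_neg at hcon
            rcases Nat.eq_or_lt_of_le hcon with h'|h'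
            · rw [← h'] at hle2
              simp only at hle2
              omega
            · have := hJmono (s+1) t (by omega) h' (by omega)
              simp only at hle2
              omega
          have hIle : I t ≤ I s := by
            rcases Nat.eq_or_lt_of_le (show t ≤ s by omega) with h'|h'
            · rw [h']
            · exact Nat.le_of_lt (hImono t s h' hsk)
          simp only at hle1
          omega
        have hKey := hmax (x.1 - 1, x.2) ⟨hyr, hynup⟩ ⟨by omega, by omega⟩
        apply_fun Prod.fst at hKey
        simp only at hKey
        omega
      have hb2 : x.2 = J (s+1) - 1 := by
        by_contra hne
        have h2 : x.2 + 2 ≤ J (s+1) := by omega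
        have hx2n : x.2 + 1 ≤ n := by
          rcases Nat.lt_or_ge s k with h|h
          · have := (hbounds (s+1) (by omega) (by omega)).2.2; omega
          · have hsk' : s = k := by omega
            have : J (s+1) = n + 1 := by rw [hsk', hJtop]
            omega
        have hyr : (x.1, x.2 + 1) ∈ roots n := by
          rw [mem_roots']; exact ⟨by omega, by omega, by omega⟩
        have hynup : (x.1, x.2 + 1) ∉ upIdeal n Γ := by
          intro hmem
          obtain ⟨_, t, h1, h2', hle1, hle2⟩ := (hup _).1 hmem
          simp only at hle1 hle2
          have hst : s < t := by
            by_contra hcon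
            push_neg at hcon
            have hIle : I t ≤ I s := by
              rcases Nat.eq_or_lt_of_le hcon with h'|h'
              · rw [h']
              · exact Nat.le_of_lt (hImono t s h' hsk)
            omega
          have hJge : J (s+1) ≤ J t := by
            rcases Nat.eq_or_lt_of_le (show s + 1 ≤ t by omega) with h'|h'
            · rw [h']
            · exact Nat.le_of_lt (hJmono (s+1) t (by omega) h' (by omega))
          omega
        have hKey := hmax (x.1, x.2 + 1) ⟨hyr, hynup⟩ ⟨by omega, by omega⟩
        apply_fun Prod.snd at hKey
        simp only at hKey
        omega
      have hfs1 : (f s).1 = I s + 1 := by rw [hf]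
      have hfs2 : (f s).2 = J (s+1) - 1 := by rw [hf]
      refine Finset.mem_image.2 ⟨s, Finset.mem_filter.2
        ⟨Finset.mem_range.2 (by omega), show I s + 2 ≤ J (s+1) by omega⟩, ?_⟩
      exact Prod.ext (by omega) (by omega)
    · intro hmem
      obtain ⟨s, hsS, rfl⟩ := Finset.mem_image.1 hmem
      obtain ⟨hsr', hsc⟩ := Finset.mem_filter.1 hsS
      rw [Finset.mem_range] at hsr'
      have hsr : s ≤ k := by omega
      have hsc' : I s + 2 ≤ J (s+1) := hsc
      have hfs1 : (f s).1 = I s + 1 := by rw [hf]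
      have hfs2 : (f s).2 = J (s+1) - 1 := by rw [hf]
      have hJn : J (s+1) ≤ n + 1 ∧ (s < k → J (s+1) ≤ n) := by
        rcases Nat.lt_or_ge s k with h|h
        · have := (hbounds (s+1) (by omega) (by omega)).2.2
          exact ⟨by omega, fun _ => this⟩
        · have hsk' : s = k := by omega
          have : J (s+1) = n + 1 := by rw [hsk', hJtop]
          exact ⟨by omega, fun h' => absurd h' (by omega)⟩
      refine ⟨⟨?_, ?_⟩, ?_⟩
      · rw [mem_roots']
        refine ⟨by omega, by omega, by omega⟩
      · intro hmem'
        obtain ⟨_, t, h1, h2, hle1, hle2⟩ := (hup _).1 hmem'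
        have hst : s < t := by
          by_contra hcon
          push_neg at hcon
          have hIle : I t ≤ I s := by
            rcases Nat.eq_or_lt_of_le hcon with h'|h'
            · rw [h']
            · exact Nat.le_of_lt (hImono t s h' hsr)
          omega
        have hJge : J (s+1) ≤ J t := by
          rcases Nat.eq_or_lt_of_le (show s + 1 ≤ t by omega) with h'|h'
          · rw [h']
          · exact Nat.le_of_lt (hJmono (s+1) t (by omega) h' (by omega))
        omega
      · rintro y ⟨hyr, hynup⟩ ⟨hle1, hle2⟩
        have hy' := mem_roots'.1 hyr
        have havoid : ∀ t, 1 ≤ t → t ≤ k → ¬(y.1 ≤ I t ∧ J t ≤ y.2) :=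
          fun t h1 h2 hc => hynup ((hup y).2 ⟨hyr, t, h1, h2, hc.1, hc.2⟩)
        have hy1 : y.1 = I s + 1 := by
          by_contra hne
          have hle : y.1 ≤ I s := by omega
          rcases Nat.eq_zero_or_pos s with rfl|hs1
          · rw [hI0] at hle; omega
          · have hJs : J s < J (s+1) := hJmono s (s+1) hs1 (by omega) (by omega)
            exact havoid s hs1 hsr ⟨hle, by omega⟩
        have hy2 : y.2 = J (s+1) - 1 := by
          by_contra hne
          have hge : J (s+1) ≤ y.2 := by omega
          rcases Nat.lt_or_ge s k with h|h
          · have hII : I s < I (s+1) := hImono s (s+1) (by omega) (by omega)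
            exact havoid (s+1) (by omega) (by omega) ⟨by omega, hge⟩
          · have hsk' : s = k := by omega
            have : J (s+1) = n + 1 := by rw [hsk', hJtop]
            omega
        exact Prod.ext (by omega) (by omega)
  -- OY of Γ
  have hginj : ∀ x ∈ Finset.range k, ∀ y ∈ Finset.range k,
      (I (x+1), J (x+1)) = (I (y+1), J (y+1)) → x = y := by
    intro x hx y hy hxy
    rw [Finset.mem_range] at hx hy
    have hI : I (x+1) = I (y+1) := congrArg Prod.fst hxy
    by_contra hne
    rcases Nat.lt_or_ge x y with h|h
    · have := hImono (x+1) (y+1) (by omega) (by omega); omega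
    · have := hImono (y+1) (x+1) (by omega) (by omega); omega
  have hfst : Γ.image Prod.fst = (Finset.range k).image (fun m => I (m+1)) := by
    rw [hΓeq, Finset.image_image]; rfl
  have hsnd : Γ.image Prod.snd = (Finset.range k).image (fun m => J (m+1)) := by
    rw [hΓeq, Finset.image_image]; rfl
  have hOYΓ : OY n Γ = ∑ m ∈ Finset.range k,
      ((if I m + 1 < I (m+1) then (1:ℤ) else 0) + (if J (m+1) + 1 < J (m+2) then (1:ℤ) else 0)) := by
    have hA : (Γ.filter (fun γ => 2 ≤ γ.1 ∧ γ.1 - 1 ∉ Γ.image Prod.fst)).card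
        = ∑ m ∈ Finset.range k, if I m + 1 < I (m+1) then 1 else 0 := by
      rw [Finset.card_filter, hfst, hΓeq, Finset.sum_image hginj]
      apply Finset.sum_congr rfl
      intro m hm
      rw [Finset.mem_range] at hm
      have hd : (m = 0 ∧ I m = 0) ∨ (1 ≤ m ∧ 1 ≤ I m) := by
        rcases Nat.eq_zero_or_pos m with rfl|h
        · exact Or.inl ⟨rfl, hI0⟩
        · exact Or.inr ⟨h, (hbounds m h (by omega)).1⟩
      have hmono1 : I m < I (m+1) := hImono m (m+1) (by omega) (by omega)
      split_ifs with h1 h2 h2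
      · rfl
      · exfalso
        obtain ⟨h2', hnot⟩ := h1
        have heq : I m + 1 = I (m+1) := by omega
        have hm1 : 1 ≤ m := by omega
        apply hnot
        refine Finset.mem_image.2 ⟨m-1, Finset.mem_range.2 (by omega), ?_⟩
        have hmm : m - 1 + 1 = m := by omega
        rw [hmm]
        omega
      · exfalso
        apply h1
        refine ⟨by omega, fun hmem => ?_⟩
        obtain ⟨t, ht, heq⟩ := Finset.mem_image.1 hmem
        rw [Finset.mem_range] at ht
        have heq' : I (t+1) + 1 = I (m+1) := by omega
        have hgl := gap_lemma (f := I) (a := 0) (b := k)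
          (fun s t _ h h' => hImono s t h h') (by omega) (by omega) (by omega) (by omega) heq'
        have htm : t + 1 = m := by omega
        rw [htm] at heq'
        omega
      · rfl
    have hB : (Γ.filter (fun γ => γ.2 < n ∧ γ.2 + 1 ∉ Γ.image Prod.snd)).card
        = ∑ m ∈ Finset.range k, if J (m+1) + 1 < J (m+2) then 1 else 0 := by
      rw [Finset.card_filter, hsnd, hΓeq, Finset.sum_image hginj]
      apply Finset.sum_congr rfl
      intro m hm
      rw [Finset.mem_range] at hm
      have hmono1 : J (m+1) < J (m+2) := hJmono (m+1) (m+2) (by omega) (by omega) (by omega)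
      have e0 : J (m+1+1) = J (m+2) := rfl
      split_ifs with h1 h2 h2
      · rfl
      · exfalso
        obtain ⟨h2', hnot⟩ := h1
        have heq : J (m+1) + 1 = J (m+2) := by omega
        rcases Nat.lt_or_ge (m+1) k with hk|hk
        · apply hnot
          refine Finset.mem_image.2 ⟨m+1, Finset.mem_range.2 hk, ?_⟩
          omega
        · have hmk : m + 2 = k + 1 := by omega
          rw [hmk, hJtop] at heq
          omega
      · exfalso
        apply h1
        constructor
        · rcases Nat.lt_or_ge (m+1) k with hk|hk
          · have := (hbounds (m+2) (by omega) (by omega)).2.2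
            omega
          · have hmk : m + 2 = k + 1 := by omega
            rw [hmk, hJtop] at h2
            omega
        · intro hmem
          obtain ⟨t, ht, heq⟩ := Finset.mem_image.1 hmem
          rw [Finset.mem_range] at ht
          have heq' : J (m+1) + 1 = J (t+1) := by omega
          have hgl := gap_lemma (f := J) (a := 1) (b := k+1)
            (fun s t h1' h2' h3' => hJmono s t h1' h2' h3')
            (by omega) (by omega) (by omega) (by omega) heq'
          have htm : t + 1 = m + 2 := by omega
          rw [htm] at heq'
          omega
      · rfl
    rw [OY_eq hΓAC, hA, hB, Finset.sum_add_distrib]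
    push_cast
    congr 1
  -- OY of Xrev
  have hfinj : ∀ x ∈ Sf, ∀ y ∈ Sf, f x = f y → x = y := by
    intro x hx y hy hxy
    have hx' := Finset.mem_range.1 (Finset.mem_filter.1 hx).1
    have hy' := Finset.mem_range.1 (Finset.mem_filter.1 hy).1
    have hIe : I x + 1 = I y + 1 := congrArg Prod.fst hxy
    by_contra hne
    rcases Nat.lt_or_ge x y with h|h
    · have := hImono x y h (by omega); omega
    · have := hImono y x (by omega) (by omega); omega
  have hXfst : (Sf.image f).image Prod.fst = Sf.image (fun s => I s + 1) := by
    rw [Finset.image_image]; rfl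
  have hXsnd : (Sf.image f).image Prod.snd = Sf.image (fun s => J (s+1) - 1) := by
    rw [Finset.image_image]; rfl
  have hOYX : OY n (Xrev n Γ) =
      (∑ s ∈ Finset.range (k+1), (if I s + 2 ≤ J (s+1) ∧ 1 ≤ s ∧
          ¬(I (s-1) + 2 ≤ J s ∧ I (s-1) + 1 = I s) then (1:ℤ) else 0)) +
      (∑ s ∈ Finset.range (k+1), (if I s + 2 ≤ J (s+1) ∧ s < k ∧
          ¬(I (s+1) + 2 ≤ J (s+2) ∧ J (s+2) = J (s+1) + 1) then (1:ℤ) else 0)) := by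
    have hA' : ((Sf.image f).filter
          (fun γ => 2 ≤ γ.1 ∧ γ.1 - 1 ∉ Sf.image (fun s => I s + 1))).card
        = ∑ s ∈ Finset.range (k+1), if I s + 2 ≤ J (s+1) ∧ 1 ≤ s ∧
          ¬(I (s-1) + 2 ≤ J s ∧ I (s-1) + 1 = I s) then 1 else 0 := by
      rw [Finset.card_filter, Finset.sum_image hfinj, hSf, Finset.sum_filter]
      apply Finset.sum_congr rfl
      intro s hs
      rw [Finset.mem_range] at hs
      have hd : (s = 0 ∧ I s = 0) ∨ (1 ≤ s ∧ 1 ≤ I s) := by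
        rcases Nat.eq_zero_or_pos s with rfl|h
        · exact Or.inl ⟨rfl, hI0⟩
        · exact Or.inr ⟨h, (hbounds s h (by omega)).1⟩
      have hiffA : (2 ≤ (f s).1 ∧ (f s).1 - 1 ∉ Sf.image (fun t => I t + 1)) ↔
          (1 ≤ s ∧ ¬(I (s-1) + 2 ≤ J s ∧ I (s-1) + 1 = I s)) := by
        constructor
        · rintro ⟨h2, hnot⟩
          have hf1 : (f s).1 = I s + 1 := rfl
          have hs1 : 1 ≤ s := by omega
          refine ⟨hs1, ?_⟩
          rintro ⟨hP, hE⟩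
          apply hnot
          refine Finset.mem_image.2 ⟨s-1, Finset.mem_filter.2 ⟨Finset.mem_range.2 (by omega), ?_⟩, ?_⟩
          · have hsm : s - 1 + 1 = s := by omega
            rw [hsm]; exact hP
          · omega
        · rintro ⟨hs1, hnot⟩
          have hf1 : (f s).1 = I s + 1 := rfl
          constructor
          · omega
          · intro hmem
            obtain ⟨t, htS, heq⟩ := Finset.mem_image.1 hmem
            obtain ⟨htr, htc⟩ := Finset.mem_filter.1 htS
            rw [Finset.mem_range] at htr
            have heq' : I t + 1 = I s := by omega
            have hgl := gap_lemma (f := I) (a := 0) (b := k)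
              (fun a b _ h h' => hImono a b h h') (by omega) (by omega) (by omega) (by omega) heq'
            have htm : t = s - 1 := by omega
            have hts : t + 1 = s := by omega
            rw [hts] at htc
            rw [htm] at htc heq'
            exact hnot ⟨htc, heq'⟩
      rw [if_congr (Iff.rfl) rfl rfl]
      by_cases hc0 : I s + 2 ≤ J (s+1)
      · rw [if_pos hc0, if_congr hiffA rfl rfl]
        by_cases hT : 1 ≤ s ∧ ¬(I (s-1) + 2 ≤ J s ∧ I (s-1) + 1 = I s)
        · rw [if_pos hT, if_pos ⟨hc0, hT⟩]
        · rw [if_neg hT, if_neg (fun h => hT h.2)]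
      · rw [if_neg hc0, if_neg (fun h => hc0 h.1)]
    have hB' : ((Sf.image f).filter
          (fun γ => γ.2 < n ∧ γ.2 + 1 ∉ Sf.image (fun s => J (s+1) - 1))).card
        = ∑ s ∈ Finset.range (k+1), if I s + 2 ≤ J (s+1) ∧ s < k ∧
          ¬(I (s+1) + 2 ≤ J (s+2) ∧ J (s+2) = J (s+1) + 1) then 1 else 0 := by
      rw [Finset.card_filter, Finset.sum_image hfinj, hSf, Finset.sum_filter]
      apply Finset.sum_congr rfl
      intro s hs
      rw [Finset.mem_range] at hs
      have hJpos : 1 ≤ J (s+1) ∧ (s < k → J (s+1) ≤ n) ∧ (s = k → J (s+1) = n+1) := by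
        rcases Nat.lt_or_ge s k with h|h
        · have hb := hbounds (s+1) (by omega) (by omega)
          exact ⟨by omega, fun _ => by omega, fun h' => absurd h' (by omega)⟩
        · have hsk : s = k := by omega
          subst hsk
          exact ⟨by rw [hJtop]; omega, fun h' => absurd h' (by omega), fun _ => hJtop⟩
      have hiffB : ((f s).2 < n ∧ (f s).2 + 1 ∉ Sf.image (fun t => J (t+1) - 1)) ↔
          (s < k ∧ ¬(I (s+1) + 2 ≤ J (s+2) ∧ J (s+2) = J (s+1) + 1)) := by
        have hf2 : (f s).2 = J (s+1) - 1 := rfl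
        constructor
        · rintro ⟨h2, hnot⟩
          have hsk : s < k := by
            by_contra h
            have hsk : s = k := by omega
            have := hJpos.2.2 hsk
            omega
          refine ⟨hsk, ?_⟩
          rintro ⟨hP, hE⟩
          apply hnot
          refine Finset.mem_image.2 ⟨s+1, Finset.mem_filter.2 ⟨Finset.mem_range.2 (by omega), ?_⟩, ?_⟩
          · have hsm : s + 1 + 1 = s + 2 := rfl
            rw [hsm]; exact hP
          · have hsm : s + 1 + 1 = s + 2 := rfl
            rw [hsm]
            omega
        · rintro ⟨hsk, hnot⟩
          constructor
          · have := hJpos.2.1 hsk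
            omega
          · intro hmem
            obtain ⟨t, htS, heq⟩ := Finset.mem_image.1 hmem
            obtain ⟨htr, htc⟩ := Finset.mem_filter.1 htS
            rw [Finset.mem_range] at htr
            have heq' : J (s+1) + 1 = J (t+1) := by omega
            have hgl := gap_lemma (f := J) (a := 1) (b := k+1)
              (fun a b h1' h2' h3' => hJmono a b h1' h2' h3')
              (by omega) (by omega) (by omega) (by omega) heq'
            have hts : t + 1 = s + 2 := by omega
            rw [hts] at htc heq'
            have htm : t = s + 1 := by omega
            rw [htm] at htc
            exact hnot ⟨htc, by omega⟩
      by_cases hc0 : I s + 2 ≤ J (s+1)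
      · rw [if_pos hc0, if_congr hiffB rfl rfl]
        by_cases hT : s < k ∧ ¬(I (s+1) + 2 ≤ J (s+2) ∧ J (s+2) = J (s+1) + 1)
        · rw [if_pos hT, if_pos ⟨hc0, hT⟩]
        · rw [if_neg hT, if_neg (fun h => hT h.2)]
      · rw [if_neg hc0, if_neg (fun h => hc0 h.1)]
    rw [OY_eq (Xrev_isAC Γ), hXrev, hXfst, hXsnd, hA', hB']
    push_cast
    rfl
  -- final computation
  rw [hOYX, hOYΓ]
  rw [Finset.sum_range_succ' (fun s => if I s + 2 ≤ J (s+1) ∧ 1 ≤ s ∧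
        ¬(I (s-1) + 2 ≤ J s ∧ I (s-1) + 1 = I s) then (1:ℤ) else 0) k]
  rw [Finset.sum_range_succ (fun s => if I s + 2 ≤ J (s+1) ∧ s < k ∧
        ¬(I (s+1) + 2 ≤ J (s+2) ∧ J (s+2) = J (s+1) + 1) then (1:ℤ) else 0) k]
  simp only [show ¬(1:ℕ) ≤ 0 by omega, show ¬ k < k by omega, and_false, false_and, if_false]
  rw [add_zero, add_zero, ← Finset.sum_add_distrib]
  apply Finset.sum_congr rfl
  intro m hm
  rw [Finset.mem_range] at hm
  have e1 : I m < I (m+1) := hImono m (m+1) (by omega) (by omega)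
  have e2 : J (m+1) < J (m+2) := hJmono (m+1) (m+2) (by omega) (by omega) (by omega)
  have e3 : I (m+1) ≤ J (m+1) := (hbounds (m+1) (by omega) (by omega)).2.1
  simp only [Nat.add_sub_cancel, show m + 1 + 1 = m + 2 from rfl]
  split_ifs <;> omega

/-- lexicographic-style order used for sorting antichains -/
def lexr (p q : ℕ × ℕ) : Prop := p.1 < q.1 ∨ (p.1 = q.1 ∧ p.2 ≤ q.2)

instance : DecidableRel lexr := fun p q =>
  inferInstanceAs (Decidable (p.1 < q.1 ∨ (p.1 = q.1 ∧ p.2 ≤ q.2)))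

instance : IsTrans (ℕ × ℕ) lexr := ⟨by intro a b c h1 h2; unfold lexr at *; omega⟩

instance : IsAntisymm (ℕ × ℕ) lexr :=
  ⟨by intro a b h1 h2; unfold lexr at *; exact Prod.ext (by omega) (by omega)⟩

instance : IsTotal (ℕ × ℕ) lexr := ⟨by intro a b; unfold lexr; omega⟩

theorem stmt5 (n : ℕ) (hn : 1 ≤ n) (Γ : Finset (ℕ × ℕ)) (hΓ : IsAC n Γ) :
    OY n (Xrev n Γ) = OY n Γ := by
  classical
  set l := Γ.sort lexr with hl
  have hlen : l.length = Γ.card := Finset.length_sort lexr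
  have hmeml : ∀ x, x ∈ l ↔ x ∈ Γ := fun x => Finset.mem_sort lexr
  have hsorted : List.Pairwise lexr l := Finset.pairwise_sort Γ lexr
  have hnodup : l.Nodup := Finset.sort_nodup Γ lexr
  set k := Γ.card with hk
  -- key strictness fact
  have key : ∀ i j (hi : i < l.length) (hj : j < l.length), i < j →
      (l[i].1 < l[j].1 ∧ l[i].2 < l[j].2) := by
    intro i j hi hj hij
    have hr : lexr l[i] l[j] := by
      have := hsorted.rel_get_of_lt (a := ⟨i, hi⟩) (b := ⟨j, hj⟩) (by exact hij)
      simpa using this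
    have hne : l[i] ≠ l[j] := by
      intro h
      rw [hnodup.getElem_inj_iff] at h
      omega
    have hpi : l[i] ∈ Γ := (hmeml _).1 (List.getElem_mem hi)
    have hpj : l[j] ∈ Γ := (hmeml _).1 (List.getElem_mem hj)
    have h1 : l[i].1 < l[j].1 := by
      rcases hr with h|h
      · exact h
      · exact absurd (AC_fst_inj hΓ hpi hpj h.1) hne
    exact ⟨h1, AC_lt hΓ hpi hpj h1⟩
  have hroots : ∀ i (hi : i < l.length), 1 ≤ l[i].1 ∧ l[i].1 ≤ l[i].2 ∧ l[i].2 ≤ n := by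
    intro i hi
    exact mem_roots'.1 (hΓ.1 ((hmeml _).1 (List.getElem_mem hi)))
  -- sequences
  set Ifun : ℕ → ℕ := fun s => if s = 0 then 0 else (l.getD (s-1) (0,0)).1 with hIfun
  set Jfun : ℕ → ℕ := fun s => if 1 ≤ s ∧ s ≤ k then (l.getD (s-1) (0,0)).2 else n+1 with hJfun
  have hIval : ∀ s, 1 ≤ s → s ≤ k → ∀ (h : s - 1 < l.length), Ifun s = l[s-1].1 := by
    intro s h1 h2 h
    simp only [hIfun, if_neg (by omega : ¬ s = 0)]
    rw [List.getD_eq_getElem _ _ h]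
  have hJval : ∀ s, 1 ≤ s → s ≤ k → ∀ (h : s - 1 < l.length), Jfun s = l[s-1].2 := by
    intro s h1 h2 h
    simp only [hJfun, if_pos (⟨h1, h2⟩ : 1 ≤ s ∧ s ≤ k)]
    rw [List.getD_eq_getElem _ _ h]
  apply abstract_main n k hn Ifun Jfun
  · simp [hIfun]
  · simp only [hJfun, if_neg (by omega : ¬ (1 ≤ k+1 ∧ k+1 ≤ k))]
  · -- hImono
    intro s t hst htk
    have ht1 : t - 1 < l.length := by omega
    rw [hIval t (by omega) htk ht1]
    rcases Nat.eq_zero_or_pos s with rfl|hs1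
    · simp only [hIfun, if_pos rfl]
      exact (hroots (t-1) ht1).1
    · have hs1' : s - 1 < l.length := by omega
      rw [hIval s hs1 (by omega) hs1']
      exact (key (s-1) (t-1) hs1' ht1 (by omega)).1
  · -- hJmono
    intro s t h1s hst htk1
    have hs1' : s - 1 < l.length := by omega
    rw [hJval s h1s (by omega) hs1']
    rcases Nat.lt_or_ge t (k+1) with h|h
    · have ht1 : t - 1 < l.length := by omega
      rw [hJval t (by omega) (by omega) ht1]
      exact (key (s-1) (t-1) hs1' ht1 (by omega)).2
    · have htk : t = k + 1 := by omega
      subst htk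
      simp only [hJfun, if_neg (by omega : ¬ (1 ≤ k+1 ∧ k+1 ≤ k))]
      have := (hroots (s-1) hs1').2.2
      omega
  · -- hbounds
    intro s h1 h2
    have hs1' : s - 1 < l.length := by omega
    rw [hIval s h1 h2 hs1', hJval s h1 h2 hs1']
    exact hroots (s-1) hs1'
  · -- hΓeq
    ext x
    simp only [Finset.mem_image, Finset.mem_range]
    constructor
    · intro hx
      obtain ⟨m, hm, hxm⟩ := List.mem_iff_getElem.1 ((hmeml x).2 hx)
      refine ⟨m, by omega, ?_⟩
      rw [hIval (m+1) (by omega) (by omega) (by simpa using hm),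
        hJval (m+1) (by omega) (by omega) (by simpa using hm)]
      simp only [Nat.add_sub_cancel]
      rw [← hxm]
    · rintro ⟨m, hm, rfl⟩
      have hm' : m < l.length := by omega
      rw [hIval (m+1) (by omega) (by omega) (by simpa using hm'),
        hJval (m+1) (by omega) (by omega) (by simpa using hm')]
      simp only [Nat.add_sub_cancel]
      exact (hmeml _).1 (by rw [Prod.mk.eta]; exact List.getElem_mem hm')
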